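/- Nonemptiness of the core for convex (supermodular) games: if a TU game (N, v) satisfies v(S ∪ T) + v(S ∩ T) ≥ v(S) + v(T) for all coalitions S, T, then its core is nonempty; in particular, the marginal-contribution vector along any ordering of the players lies in the core. -/

import Mathlib

open Finset

/-- The marginal-contribution vector of a convex (supermodular) TU game along the
ordering `σ`. -/
noncomputable def marginalVector {ι : Type*} [Fintype ι] [DecidableEq ι]
    (v : Finset ι → ℝ) (σ : Fin (Fintype.card ι) ≃ ι) (i : ι) : ℝ :=
  v (Finset.univ.filter fun j => σ.symm j ≤ σ.symm i) -
    v (Finset.univ.filter fun j => σ.symm j < σ.symm i)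

private lemma finMarginal (n : ℕ) (w : Finset (Fin n) → ℝ) (h0 : w ∅ = 0)
    (hsup : ∀ S T, w S + w T ≤ w (S ∪ T) + w (S ∩ T)) :
    (∑ j, (w (Iic j) - w (Iio j)) = w univ) ∧
    ∀ S : Finset (Fin n), w S ≤ ∑ j ∈ S, (w (Iic j) - w (Iio j)) := by
  set x : Fin n → ℝ := fun j => w (Iic j) - w (Iio j) with hx
  set P : ℕ → Finset (Fin n) := fun k => univ.filter fun i => (i : ℕ) < k with hP
  have hP0 : P 0 = ∅ := by simp [hP]
  have hPn : ∀ k, n ≤ k → P k = univ := by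
    intro k hk; ext i; simp only [hP, mem_filter, mem_univ, true_and, iff_true]
    exact lt_of_lt_of_le i.isLt hk
  have hPsucc : ∀ (k : ℕ) (hk : k < n), P (k + 1) = Iic ⟨k, hk⟩ := by
    intro k hk; ext j; simp [hP, Fin.le_def]
  have hPIio : ∀ (k : ℕ) (hk : k < n), P k = Iio ⟨k, hk⟩ := by
    intro k hk; ext j; simp [hP, Fin.lt_def]
  have hnot : ∀ (k : ℕ) (hk : k < n), (⟨k, hk⟩ : Fin n) ∉ P k := by
    intro k hk; simp [hP]
  have hins : ∀ (k : ℕ) (hk : k < n), P (k + 1) = insert ⟨k, hk⟩ (P k) := by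
    intro k hk; ext j; simp [hP, Fin.ext_iff]; omega
  have main : ∀ k, (∑ j ∈ P k, x j = w (P k)) ∧
      ∀ S, w (S ∩ P k) ≤ ∑ j ∈ S ∩ P k, x j := by
    intro k
    induction k with
    | zero => simp [hP0, h0]
    | succ k ih =>
      obtain ⟨ih1, ih2⟩ := ih
      by_cases hk : k < n
      · set i : Fin n := ⟨k, hk⟩ with hi
        constructor
        · rw [hins k hk, sum_insert (hnot k hk), ih1]
          have h1 : P (k + 1) = Iic i := hPsucc k hk
          have h2 : P k = Iio i := hPIio k hk
          rw [← hins k hk, h1, h2]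
          simp [hx, hi]
        · intro S
          by_cases hiS : i ∈ S
          · have hiP : i ∉ S ∩ P k := fun h => hnot k hk (mem_inter.mp h).2
            have hSeq : S ∩ P (k + 1) = insert i (S ∩ P k) := by
              rw [hins k hk, inter_insert_of_mem hiS]
            have hcup : insert i (S ∩ P k) ∪ P k = Iic i := by
              rw [← hPsucc k hk, hins k hk]
              ext j
              simp only [mem_union, mem_insert, mem_inter]
              tauto
            have hcap : (insert i (S ∩ P k)) ∩ P k = S ∩ P k := by
              ext j
              simp only [mem_inter, mem_insert]
              constructor
              · rintro ⟨h1 | h1, h2⟩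
                · rw [h1] at h2; exact absurd h2 (hnot k hk)
                · exact h1
              · intro h; exact ⟨Or.inr h, h.2⟩
            have hs := hsup (insert i (S ∩ P k)) (P k)
            rw [hcup, hcap] at hs
            have hxi : x i = w (Iic i) - w (P k) := by
              show w (Iic i) - w (Iio i) = _
              rw [hPIio k hk]
            rw [hSeq, sum_insert hiP]
            have : w (insert i (S ∩ P k)) ≤ x i + w (S ∩ P k) := by
              linarith
            calc w (insert i (S ∩ P k)) ≤ x i + w (S ∩ P k) := this
              _ ≤ x i + ∑ j ∈ S ∩ P k, x j := by linarith [ih2 S]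
          · have hSeq : S ∩ P (k + 1) = S ∩ P k := by
              rw [hins k hk]
              ext j
              simp only [mem_inter, mem_insert]
              constructor
              · rintro ⟨h1, h2 | h2⟩
                · rw [h2] at h1; exact absurd h1 hiS
                · exact ⟨h1, h2⟩
              · intro h; exact ⟨h.1, Or.inr h.2⟩
            rw [hSeq]; exact ih2 S
      · have heq : P (k + 1) = P k := by
          rw [hPn k (not_lt.mp hk), hPn (k + 1) (by omega)]
        rw [heq]; exact ⟨ih1, ih2⟩
    
  obtain ⟨m1, m2⟩ := main n
  rw [hPn n le_rfl] at m1 m2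
  constructor
  · exact m1
  · intro S
    have := m2 S
    rwa [inter_univ S] at this

theorem convex_game_core_nonempty {ι : Type*} [Fintype ι] [DecidableEq ι]
    (v : Finset ι → ℝ) (hv0 : v ∅ = 0)
    (hsup : ∀ S T : Finset ι, v S + v T ≤ v (S ∪ T) + v (S ∩ T)) :
    (∃ x : ι → ℝ, ∑ i, x i = v Finset.univ ∧ ∀ S : Finset ι, v S ≤ ∑ i ∈ S, x i) ∧
    ∀ σ : Fin (Fintype.card ι) ≃ ι,
      (∑ i, marginalVector v σ i = v Finset.univ ∧
        ∀ S : Finset ι, v S ≤ ∑ i ∈ S, marginalVector v σ i) := by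
  have key : ∀ σ : Fin (Fintype.card ι) ≃ ι,
      (∑ i, marginalVector v σ i = v Finset.univ ∧
        ∀ S : Finset ι, v S ≤ ∑ i ∈ S, marginalVector v σ i) := by
    intro σ
    set w : Finset (Fin (Fintype.card ι)) → ℝ := fun A => v (A.image σ) with hw
    have h0 : w ∅ = 0 := by simp [hw, hv0]
    have hs : ∀ S T, w S + w T ≤ w (S ∪ T) + w (S ∩ T) := by
      intro S T
      have := hsup (S.image σ) (T.image σ)
      rwa [← image_union, ← image_inter _ _ σ.injective] at this
    obtain ⟨h1, h2⟩ := finMarginal (Fintype.card ι) w h0 hs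
    have hIic : ∀ i : ι, (univ.filter fun j => σ.symm j ≤ σ.symm i)
        = (Iic (σ.symm i)).image σ := by
      intro i
      ext j
      simp only [mem_filter, mem_univ, true_and, mem_image, mem_Iic]
      constructor
      · intro h; exact ⟨σ.symm j, h, by simp⟩
      · rintro ⟨k, hk, rfl⟩; simpa using hk
    have hIio : ∀ i : ι, (univ.filter fun j => σ.symm j < σ.symm i)
        = (Iio (σ.symm i)).image σ := by
      intro i
      ext j
      simp only [mem_filter, mem_univ, true_and, mem_image, mem_Iio]
      constructor
      · intro h; exact ⟨σ.symm j, h, by simp⟩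
      · rintro ⟨k, hk, rfl⟩; simpa using hk
    have hm : ∀ j : Fin (Fintype.card ι), marginalVector v σ (σ j) = w (Iic j) - w (Iio j) := by
      intro j
      unfold marginalVector
      rw [hIic, hIio]
      simp [hw]
    constructor
    · rw [← Equiv.sum_comp σ (marginalVector v σ)]
      calc ∑ j, marginalVector v σ (σ j) = ∑ j, (w (Iic j) - w (Iio j)) := by
            exact Finset.sum_congr rfl fun j _ => hm j
        _ = w univ := h1
        _ = v Finset.univ := by
            simp only [hw]
            congr 1
            ext i
            simp
    · intro S
      set A : Finset (Fin (Fintype.card ι)) := S.image σ.symm with hA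
      have hAS : A.image σ = S := by
        rw [hA, image_image]
        simp
      have hvS : v S = w A := by rw [hw]; simp [hAS]
      have hsum : ∑ i ∈ S, marginalVector v σ i = ∑ j ∈ A, (w (Iic j) - w (Iio j)) := by
        rw [← hAS, sum_image (fun a _ b _ h => σ.injective h)]
        exact Finset.sum_congr rfl fun j _ => hm j
      rw [hvS, hsum]
      exact h2 A
  exact ⟨⟨marginalVector v (Fintype.equivFin ι).symm,
      (key (Fintype.equivFin ι).symm).1, (key (Fintype.equivFin ι).symm).2⟩, key⟩
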